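/- Define p : ℂ³ → ℂ by p(x, y, z) = x·y·z − x − z. Then the map Φ : ℂ* × p⁻¹(1) → ℂ³ given by Φ(λ, (x, y, z)) = (λ·x, λ⁻¹·y, λ·z), where ℂ* = ℂ \ {0}, satisfies p(Φ(λ, (x, y, z))) = λ for all inputs, and Φ is a bijection from ℂ* × p⁻¹(1) onto the set {v ∈ ℂ³ : p(v) ≠ 0}. -/

import Mathlib

/-- For `p(x, y, z) = xyz − x − z`, the scaling map
`Φ(λ, (x, y, z)) = (λx, λ⁻¹y, λz)` satisfies `p ∘ Φ = λ` on `ℂ* × p⁻¹(1)` and is a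
bijection from `ℂ* × p⁻¹(1)` onto `{p ≠ 0}`. -/
theorem scaling_bijection (p : ℂ × ℂ × ℂ → ℂ)
    (hp : ∀ x y z : ℂ, p (x, y, z) = x * y * z - x - z)
    (Φ : ℂ × (ℂ × ℂ × ℂ) → ℂ × ℂ × ℂ)
    (hΦ : ∀ l x y z : ℂ, Φ (l, (x, y, z)) = (l * x, l⁻¹ * y, l * z)) :
    (∀ q ∈ {q : ℂ × (ℂ × ℂ × ℂ) | q.1 ≠ 0 ∧ p q.2 = 1}, p (Φ q) = q.1) ∧
    Set.BijOn Φ {q : ℂ × (ℂ × ℂ × ℂ) | q.1 ≠ 0 ∧ p q.2 = 1} {v : ℂ × ℂ × ℂ | p v ≠ 0} := by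
  have key : ∀ q ∈ {q : ℂ × (ℂ × ℂ × ℂ) | q.1 ≠ 0 ∧ p q.2 = 1}, p (Φ q) = q.1 := by
    rintro ⟨l, x, y, z⟩ ⟨hl, hpq⟩
    simp only at hl
    rw [hΦ, hp]
    rw [hp] at hpq
    field_simp
    linear_combination hpq
  refine ⟨key, ?_, ?_, ?_⟩
  · rintro ⟨l, x, y, z⟩ hq
    have := key _ hq
    simpa [this] using hq.1
  · rintro ⟨l, x, y, z⟩ hq ⟨l', x', y', z'⟩ hq' heq
    have h1 := key _ hq
    have h2 := key _ hq'
    simp only at h1 h2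
    have hll : l = l' := by rw [heq, h2] at h1; exact h1.symm
    have hl : l ≠ 0 := hq.1
    rw [hΦ, hΦ, hll] at heq
    have h3 : l' ≠ 0 := by rw [← hll]; exact hl
    obtain ⟨e1, e2, e3⟩ : l' * x = l' * x' ∧ l'⁻¹ * y = l'⁻¹ * y' ∧ l' * z = l' * z' := by
      simpa [Prod.ext_iff] using heq
    have hx : x = x' := mul_left_cancel₀ h3 e1
    have hy : y = y' := mul_left_cancel₀ (inv_ne_zero h3) e2
    have hz : z = z' := mul_left_cancel₀ h3 e3
    simp [hll, hx, hy, hz]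
  · rintro ⟨a, b, c⟩ hv
    simp only [Set.mem_setOf_eq, hp] at hv
    set l := a * b * c - a - c with hl
    refine ⟨(l, (a / l, l * b, c / l)), ⟨hv, ?_⟩, ?_⟩
    · rw [hp]; field_simp; ring
    · rw [hΦ]
      field_simp
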